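/- Consider the extended finite-horizon LTV system on [0,T]: x'(t)=𝒜(t)x(t)+ℬ_w(t)w(t)+ℬ_d(t)d(t), z(t)=𝒞_z(t)x(t)+𝒟_{zw}(t)w(t)+𝒟_{zd}(t)d(t), e_I(t)=𝒞_I(t)x(t)+𝒟_{Iw}(t)w(t)+𝒟_{Id}(t)d(t), e_E(t)=𝒞_E(t)x(t). Let M:[0,T]→S^{n_z} be continuous, let ε>0, γ>0, and define Q:=𝒞_Iᵀ𝒞_I, S:=𝒞_Iᵀ[𝒟_{Iw} 𝒟_{Id}], R:=[𝒟_{Iw} 𝒟_{Id}]ᵀ[𝒟_{Iw} 𝒟_{Id}]−γ²·diag(0_{n_w}, I_{n_d}). Suppose there is a continuously differentiable symmetric P:[0,T]→S^{n} with P(T)−𝒞_E(T)ᵀ𝒞_E(T) positive semidefinite, such that for all t∈[0,T] the matrix [[P'+𝒜ᵀP+P𝒜, Pℬ],[ℬᵀP, 0]] + [[Q,S],[Sᵀ,R]] + [𝒞_z 𝒟_z]ᵀM[𝒞_z 𝒟_z] + εI is negative semidefinite, where ℬ:=[ℬ_w ℬ_d] and 𝒟_z:=[𝒟_{zw} 𝒟_{zd}].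 Then for all continuous inputs w:[0,T]→ℝ^{n_w} and d:[0,T]→ℝ^{n_d} and the trajectory with x(0)=0, if the integral quadratic constraint ∫₀ᵀ z(t)ᵀM(t)z(t) dt ≥ 0 holds, then ‖e_E(T)‖² + ∫₀ᵀ‖e_I(t)‖² dt ≤ (γ²−ε) ∫₀ᵀ‖d(t)‖² dt. -/

import Mathlib

open Matrix Set

/-- The matrix appearing in the robust-performance differential LMI:
`[[P' + 𝒜ᵀP + P𝒜, Pℬ],[ℬᵀP, 0]] + [[Q,S],[Sᵀ,R]] + [𝒞_z 𝒟_z]ᵀ M [𝒞_z 𝒟_z] + εI`. -/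
noncomputable def dlmiRob {ι κ σ : Type*} [Fintype ι] [Fintype κ] [Fintype σ]
    [DecidableEq ι] [DecidableEq κ]
    (P' P 𝒜 : Matrix ι ι ℝ) (ℬ : Matrix ι κ ℝ)
    (Q : Matrix ι ι ℝ) (S : Matrix ι κ ℝ) (R : Matrix κ κ ℝ)
    (Cz : Matrix σ ι ℝ) (Dz : Matrix σ κ ℝ) (M : Matrix σ σ ℝ) (ε : ℝ) :
    Matrix (ι ⊕ κ) (ι ⊕ κ) ℝ :=
  fromBlocks (P' + 𝒜ᵀ * P + P * 𝒜) (P * ℬ) (ℬᵀ * P) 0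
    + fromBlocks Q S Sᵀ R
    + (fromCols Cz Dz)ᵀ * M * (fromCols Cz Dz)
    + ε • 1

lemma dot_transpose_mulVec {m k : Type*} [Fintype m] [Fintype k]
    (A : Matrix m k ℝ) (a : k → ℝ) (b : m → ℝ) :
    a ⬝ᵥ (Aᵀ *ᵥ b) = (A *ᵥ a) ⬝ᵥ b := by
  rw [Matrix.dotProduct_mulVec, Matrix.vecMul_transpose]

lemma dlmiRob_quadform {n nw nd nz nI : Type*}
    [Fintype n] [Fintype nw] [Fintype nd] [Fintype nz] [Fintype nI]
    [DecidableEq n] [DecidableEq nw] [DecidableEq nd]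
    (P' P 𝒜 : Matrix n n ℝ) (Bw : Matrix n nw ℝ) (Bd : Matrix n nd ℝ)
    (CI : Matrix nI n ℝ) (DIw : Matrix nI nw ℝ) (DId : Matrix nI nd ℝ)
    (Cz : Matrix nz n ℝ) (Dzw : Matrix nz nw ℝ) (Dzd : Matrix nz nd ℝ)
    (M : Matrix nz nz ℝ) (ε γ : ℝ)
    (a : n → ℝ) (wv : nw → ℝ) (dv : nd → ℝ) :
    Sum.elim a (Sum.elim wv dv) ⬝ᵥ
      ((dlmiRob P' P 𝒜 (fromCols Bw Bd)
        (CIᵀ * CI) (CIᵀ * fromCols DIw DId)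
        ((fromCols DIw DId)ᵀ * fromCols DIw DId -
          γ ^ 2 • fromBlocks (0 : Matrix nw nw ℝ) 0 0 (1 : Matrix nd nd ℝ))
        Cz (fromCols Dzw Dzd) M ε) *ᵥ Sum.elim a (Sum.elim wv dv))
    = ((𝒜 *ᵥ a + Bw *ᵥ wv + Bd *ᵥ dv) ⬝ᵥ (P *ᵥ a)
        + a ⬝ᵥ (P' *ᵥ a) + a ⬝ᵥ (P *ᵥ (𝒜 *ᵥ a + Bw *ᵥ wv + Bd *ᵥ dv)))
      + ((CI *ᵥ a + DIw *ᵥ wv + DId *ᵥ dv) ⬝ᵥ (CI *ᵥ a + DIw *ᵥ wv + DId *ᵥ dv)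
        - γ ^ 2 * (dv ⬝ᵥ dv)
        + (Cz *ᵥ a + Dzw *ᵥ wv + Dzd *ᵥ dv) ⬝ᵥ (M *ᵥ (Cz *ᵥ a + Dzw *ᵥ wv + Dzd *ᵥ dv))
        + ε * (a ⬝ᵥ a + wv ⬝ᵥ wv + dv ⬝ᵥ dv)) := by
  have h2 : ∀ (A : Matrix nI n ℝ) (b : nI → ℝ) (c : n → ℝ),
      (Aᵀ *ᵥ b) ⬝ᵥ c = b ⬝ᵥ (A *ᵥ c) := by
    intro A b c
    rw [dotProduct_comm, dot_transpose_mulVec, dotProduct_comm]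
  simp only [dlmiRob, Matrix.add_mulVec, dotProduct_add, Matrix.sub_mulVec,
    dotProduct_sub, ← Matrix.mulVec_mulVec, Matrix.fromBlocks_mulVec,
    Matrix.fromCols_mulVec_sumElim, Matrix.transpose_fromCols, Matrix.fromRows_mulVec,
    sumElim_dotProduct_sumElim, Matrix.smul_mulVec, Matrix.one_mulVec,
    Matrix.zero_mulVec, dotProduct_smul, smul_eq_mul, dot_transpose_mulVec, h2,
    Matrix.mulVec_add, add_dotProduct, dotProduct_zero,
    zero_dotProduct, add_zero, zero_add, Matrix.transpose_transpose,
    Sum.elim_comp_inl, Sum.elim_comp_inr]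
  ring

lemma contOn_mulVec {m k : ℕ} {A : ℝ → Matrix (Fin m) (Fin k) ℝ} {v : ℝ → Fin k → ℝ}
    {s : Set ℝ} (hA : ∀ i j, ContinuousOn (fun t => A t i j) s)
    (hv : ∀ j, ContinuousOn (fun t => v t j) s) (i : Fin m) :
    ContinuousOn (fun t => (A t *ᵥ v t) i) s := by
  simp only [Matrix.mulVec, dotProduct]
  exact continuousOn_finset_sum _ fun j _ => (hA i j).mul (hv j)

lemma contOn_dot {k : ℕ} {f g : ℝ → Fin k → ℝ} {s : Set ℝ}
    (hf : ∀ i, ContinuousOn (fun t => f t i) s) (hg : ∀ i, ContinuousOn (fun t => g t i) s) :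
    ContinuousOn (fun t => f t ⬝ᵥ g t) s := by
  simp only [dotProduct]
  exact continuousOn_finset_sum _ fun j _ => (hf j).mul (hg j)

lemma quad_hasDerivAt {n : ℕ} {P P' : ℝ → Matrix (Fin n) (Fin n) ℝ}
    {x x' : ℝ → Fin n → ℝ} {t : ℝ}
    (hP : ∀ i j, HasDerivAt (fun u => P u i j) (P' t i j) t)
    (hx : ∀ i, HasDerivAt (fun u => x u i) (x' t i) t) :
    HasDerivAt (fun u => x u ⬝ᵥ (P u *ᵥ x u))
      (x' t ⬝ᵥ (P t *ᵥ x t) + x t ⬝ᵥ (P' t *ᵥ x t) + x t ⬝ᵥ (P t *ᵥ x' t)) t := by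
  have hPx : ∀ i, HasDerivAt (fun u => (P u *ᵥ x u) i)
      ((P' t *ᵥ x t) i + (P t *ᵥ x' t) i) t := by
    intro i
    simp only [Matrix.mulVec, dotProduct, ← Finset.sum_add_distrib]
    exact HasDerivAt.fun_sum fun j _ => (hP i j).mul (hx j)
  have key : HasDerivAt (fun u => x u ⬝ᵥ (P u *ᵥ x u))
      (∑ i, (x' t i * (P t *ᵥ x t) i +
        x t i * ((P' t *ᵥ x t) i + (P t *ᵥ x' t) i))) t := by
    simp only [dotProduct]
    exact HasDerivAt.fun_sum fun i _ => (hx i).mul (hPx i)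
  convert key using 1
  simp only [dotProduct, mul_add, Finset.sum_add_distrib]
  ring

lemma dot_self_nonneg {k : ℕ} (v : Fin k → ℝ) : 0 ≤ v ⬝ᵥ v :=
  Finset.sum_nonneg fun i _ => mul_self_nonneg _

/-- IQC robust-performance theorem. If the differential LMI holds with
`P(T) ⪰ 𝒞_E(T)ᵀ𝒞_E(T)`, then every trajectory with `x(0)=0` whose filter output `z`
satisfies the IQC `∫ zᵀMz ≥ 0` obeys
`‖e_E(T)‖² + ∫‖e_I‖² ≤ (γ²-ε)∫‖d‖²`. -/
theorem dlmi_implies_robust_performance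
    {n nw nd nz nI nE : ℕ} {T : ℝ} (hT : 0 < T)
    (𝒜 : ℝ → Matrix (Fin n) (Fin n) ℝ)
    (Bw : ℝ → Matrix (Fin n) (Fin nw) ℝ)
    (Bd : ℝ → Matrix (Fin n) (Fin nd) ℝ)
    (Cz : ℝ → Matrix (Fin nz) (Fin n) ℝ)
    (Dzw : ℝ → Matrix (Fin nz) (Fin nw) ℝ)
    (Dzd : ℝ → Matrix (Fin nz) (Fin nd) ℝ)
    (CI : ℝ → Matrix (Fin nI) (Fin n) ℝ)
    (DIw : ℝ → Matrix (Fin nI) (Fin nw) ℝ)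
    (DId : ℝ → Matrix (Fin nI) (Fin nd) ℝ)
    (CE : ℝ → Matrix (Fin nE) (Fin n) ℝ)
    (h𝒜 : ∀ i j, ContinuousOn (fun t => 𝒜 t i j) (Icc 0 T))
    (hBw : ∀ i j, ContinuousOn (fun t => Bw t i j) (Icc 0 T))
    (hBd : ∀ i j, ContinuousOn (fun t => Bd t i j) (Icc 0 T))
    (hCz : ∀ i j, ContinuousOn (fun t => Cz t i j) (Icc 0 T))
    (hDzw : ∀ i j, ContinuousOn (fun t => Dzw t i j) (Icc 0 T))
    (hDzd : ∀ i j, ContinuousOn (fun t => Dzd t i j) (Icc 0 T))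
    (hCI : ∀ i j, ContinuousOn (fun t => CI t i j) (Icc 0 T))
    (hDIw : ∀ i j, ContinuousOn (fun t => DIw t i j) (Icc 0 T))
    (hDId : ∀ i j, ContinuousOn (fun t => DId t i j) (Icc 0 T))
    (hCE : ∀ i j, ContinuousOn (fun t => CE t i j) (Icc 0 T))
    (M : ℝ → Matrix (Fin nz) (Fin nz) ℝ)
    (hMsym : ∀ t ∈ Icc (0:ℝ) T, (M t)ᵀ = M t)
    (hMcont : ∀ i j, ContinuousOn (fun t => M t i j) (Icc 0 T))
    (ε γ : ℝ) (hε : 0 < ε) (hγ : 0 < γ)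
    (P P' : ℝ → Matrix (Fin n) (Fin n) ℝ)
    (hPsym : ∀ t ∈ Icc (0:ℝ) T, (P t)ᵀ = P t)
    (hPderiv : ∀ t ∈ Icc (0:ℝ) T, ∀ i j, HasDerivAt (fun s => P s i j) (P' t i j) t)
    (hP'cont : ∀ i j, ContinuousOn (fun t => P' t i j) (Icc 0 T))
    -- terminal condition: P(T) - 𝒞_E(T)ᵀ𝒞_E(T) ⪰ 0
    (hPT : ∀ v : Fin n → ℝ, 0 ≤ v ⬝ᵥ ((P T - (CE T)ᵀ * CE T) *ᵥ v))
    -- the differential LMI is negative semidefinite on [0,T]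
    (hDLMI : ∀ t ∈ Icc (0:ℝ) T, ∀ v : (Fin n ⊕ (Fin nw ⊕ Fin nd)) → ℝ,
      v ⬝ᵥ ((dlmiRob (P' t) (P t) (𝒜 t) (fromCols (Bw t) (Bd t))
        ((CI t)ᵀ * CI t)
        ((CI t)ᵀ * fromCols (DIw t) (DId t))
        ((fromCols (DIw t) (DId t))ᵀ * fromCols (DIw t) (DId t) -
          γ ^ 2 • fromBlocks (0 : Matrix (Fin nw) (Fin nw) ℝ) 0 0
            (1 : Matrix (Fin nd) (Fin nd) ℝ))
        (Cz t) (fromCols (Dzw t) (Dzd t)) (M t) ε) *ᵥ v) ≤ 0) :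
    ∀ (w : ℝ → Fin nw → ℝ) (d : ℝ → Fin nd → ℝ) (x : ℝ → Fin n → ℝ),
      (∀ i, ContinuousOn (fun t => w t i) (Icc 0 T)) →
      (∀ i, ContinuousOn (fun t => d t i) (Icc 0 T)) →
      x 0 = 0 →
      (∀ t ∈ Icc (0:ℝ) T, ∀ i,
        HasDerivAt (fun s => x s i)
          ((𝒜 t *ᵥ x t + Bw t *ᵥ w t + Bd t *ᵥ d t) i) t) →
      -- the IQC on the filter output z
      (0 ≤ ∫ t in (0:ℝ)..T,
        (Cz t *ᵥ x t + Dzw t *ᵥ w t + Dzd t *ᵥ d t) ⬝ᵥ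
          (M t *ᵥ (Cz t *ᵥ x t + Dzw t *ᵥ w t + Dzd t *ᵥ d t))) →
      (CE T *ᵥ x T) ⬝ᵥ (CE T *ᵥ x T) +
        (∫ t in (0:ℝ)..T,
          (CI t *ᵥ x t + DIw t *ᵥ w t + DId t *ᵥ d t) ⬝ᵥ
            (CI t *ᵥ x t + DIw t *ᵥ w t + DId t *ᵥ d t)) ≤
      (γ ^ 2 - ε) * ∫ t in (0:ℝ)..T, (d t) ⬝ᵥ (d t) := by
  intro w d x hw hd hx0 hx hIQC
  have hI : Set.uIcc (0:ℝ) T = Icc 0 T := uIcc_of_le hT.le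
  -- abbreviations
  set xd : ℝ → Fin n → ℝ := fun t => 𝒜 t *ᵥ x t + Bw t *ᵥ w t + Bd t *ᵥ d t with hxd_def
  set F' : ℝ → ℝ := fun t => xd t ⬝ᵥ (P t *ᵥ x t) + x t ⬝ᵥ (P' t *ᵥ x t)
      + x t ⬝ᵥ (P t *ᵥ xd t) with hF'_def
  set gI : ℝ → ℝ := fun t => (CI t *ᵥ x t + DIw t *ᵥ w t + DId t *ᵥ d t) ⬝ᵥ
      (CI t *ᵥ x t + DIw t *ᵥ w t + DId t *ᵥ d t) with hgI_def
  set gz : ℝ → ℝ := fun t => (Cz t *ᵥ x t + Dzw t *ᵥ w t + Dzd t *ᵥ d t) ⬝ᵥ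
      (M t *ᵥ (Cz t *ᵥ x t + Dzw t *ᵥ w t + Dzd t *ᵥ d t)) with hgz_def
  set gd : ℝ → ℝ := fun t => d t ⬝ᵥ d t with hgd_def
  set gx : ℝ → ℝ := fun t => x t ⬝ᵥ x t + w t ⬝ᵥ w t + d t ⬝ᵥ d t with hgx_def
  -- continuity
  have hxc : ∀ i, ContinuousOn (fun t => x t i) (Icc 0 T) :=
    fun i t ht => (hx t ht i).continuousAt.continuousWithinAt
  have hxdc : ∀ i, ContinuousOn (fun t => xd t i) (Icc 0 T) := by
    intro i
    simp only [hxd_def, Pi.add_apply]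
    exact ((contOn_mulVec h𝒜 hxc i).add (contOn_mulVec hBw hw i)).add (contOn_mulVec hBd hd i)
  have hPc : ∀ i j, ContinuousOn (fun t => P t i j) (Icc 0 T) :=
    fun i j t ht => (hPderiv t ht i j).continuousAt.continuousWithinAt
  have heIc : ∀ i, ContinuousOn
      (fun t => (CI t *ᵥ x t + DIw t *ᵥ w t + DId t *ᵥ d t) i) (Icc 0 T) := by
    intro i
    simp only [Pi.add_apply]
    exact ((contOn_mulVec hCI hxc i).add (contOn_mulVec hDIw hw i)).add (contOn_mulVec hDId hd i)
  have hzc : ∀ i, ContinuousOn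
      (fun t => (Cz t *ᵥ x t + Dzw t *ᵥ w t + Dzd t *ᵥ d t) i) (Icc 0 T) := by
    intro i
    simp only [Pi.add_apply]
    exact ((contOn_mulVec hCz hxc i).add (contOn_mulVec hDzw hw i)).add (contOn_mulVec hDzd hd i)
  -- integrability
  have hF'int : IntervalIntegrable F' MeasureTheory.volume 0 T := by
    apply ContinuousOn.intervalIntegrable
    rw [hI]
    exact ((contOn_dot hxdc (fun i => contOn_mulVec hPc hxc i)).add
      (contOn_dot hxc (fun i => contOn_mulVec hP'cont hxc i))).add
      (contOn_dot hxc (fun i => contOn_mulVec hPc hxdc i))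
  have hgIint : IntervalIntegrable gI MeasureTheory.volume 0 T := by
    apply ContinuousOn.intervalIntegrable
    rw [hI]; exact contOn_dot heIc heIc
  have hgzint : IntervalIntegrable gz MeasureTheory.volume 0 T := by
    apply ContinuousOn.intervalIntegrable
    rw [hI]; exact contOn_dot hzc fun i => contOn_mulVec hMcont hzc i
  have hgdint : IntervalIntegrable gd MeasureTheory.volume 0 T := by
    apply ContinuousOn.intervalIntegrable
    rw [hI]; exact contOn_dot hd hd
  have hgxint : IntervalIntegrable gx MeasureTheory.volume 0 T := by
    apply ContinuousOn.intervalIntegrable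
    rw [hI]
    exact ((contOn_dot hxc hxc).add (contOn_dot hw hw)).add (contOn_dot hd hd)
  -- pointwise DLMI inequality
  have hkey : ∀ t ∈ Icc (0:ℝ) T, F' t + (gI t - γ ^ 2 * gd t + gz t + ε * gx t) ≤ 0 := by
    intro t ht
    have h := hDLMI t ht (Sum.elim (x t) (Sum.elim (w t) (d t)))
    rw [dlmiRob_quadform] at h
    exact h
  -- FTC
  have hFTC : ∫ t in (0:ℝ)..T, F' t = x T ⬝ᵥ (P T *ᵥ x T) := by
    have := intervalIntegral.integral_eq_sub_of_hasDerivAt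
      (f := fun u => x u ⬝ᵥ (P u *ᵥ x u)) (f' := F')
      (fun t ht => quad_hasDerivAt (hPderiv t (hI ▸ ht)) (hx t (hI ▸ ht))) hF'int
    rw [this]
    simp [hx0, dotProduct]
  -- total integral nonpositive
  have hint : (∫ t in (0:ℝ)..T, F' t) +
      ((∫ t in (0:ℝ)..T, gI t) - γ ^ 2 * (∫ t in (0:ℝ)..T, gd t)
        + (∫ t in (0:ℝ)..T, gz t) + ε * (∫ t in (0:ℝ)..T, gx t)) ≤ 0 := by
    have hrest : IntervalIntegrable
        (fun t => gI t - γ ^ 2 * gd t + gz t + ε * gx t) MeasureTheory.volume 0 T :=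
      (((hgIint.sub (hgdint.const_mul _)).add hgzint).add (hgxint.const_mul _))
    have h0 : (∫ t in (0:ℝ)..T, (F' t + (gI t - γ ^ 2 * gd t + gz t + ε * gx t))) ≤
        ∫ t in (0:ℝ)..T, (0:ℝ) :=
      intervalIntegral.integral_mono_on hT.le (hF'int.add hrest)
        intervalIntegrable_const hkey
    rw [intervalIntegral.integral_add hF'int hrest,
      intervalIntegral.integral_add ((hgIint.sub (hgdint.const_mul _)).add hgzint)
        (hgxint.const_mul _),
      intervalIntegral.integral_add (hgIint.sub (hgdint.const_mul _)) hgzint,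
      intervalIntegral.integral_sub hgIint (hgdint.const_mul _),
      intervalIntegral.integral_const_mul, intervalIntegral.integral_const_mul] at h0
    simpa using h0
  -- terminal bound
  have hterm : (CE T *ᵥ x T) ⬝ᵥ (CE T *ᵥ x T) ≤ x T ⬝ᵥ (P T *ᵥ x T) := by
    have h := hPT (x T)
    rw [Matrix.sub_mulVec, dotProduct_sub, ← Matrix.mulVec_mulVec,
      dot_transpose_mulVec] at h
    linarith
  -- ∫ gd ≤ ∫ gx
  have hgdgx : (∫ t in (0:ℝ)..T, gd t) ≤ ∫ t in (0:ℝ)..T, gx t := by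
    apply intervalIntegral.integral_mono_on hT.le hgdint hgxint
    intro t ht
    simp only [hgd_def, hgx_def]
    have h1 := dot_self_nonneg (x t)
    have h2 := dot_self_nonneg (w t)
    linarith
  have hmul : ε * (∫ t in (0:ℝ)..T, gd t) ≤ ε * (∫ t in (0:ℝ)..T, gx t) :=
    mul_le_mul_of_nonneg_left hgdgx hε.le
  have heq : (γ ^ 2 - ε) * (∫ t in (0:ℝ)..T, gd t) =
      γ ^ 2 * (∫ t in (0:ℝ)..T, gd t) - ε * (∫ t in (0:ℝ)..T, gd t) := by ring
  rw [hFTC] at hint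
  linarith
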